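/- Let k be a field of characteristic ≠ 2, let p ≥ 1, and let a, b ∈ ℕ with a + b = 2p and (-1)^a = (-1)^b. Set ε = -(-1)^a, define n_e by (1-T)^a(1+T)^b = ∑_e n_e T^e, and define x_e by x_0 = 1 and ∑_{j=0}^{e} n_j x_{e-j} = 0 for e ≥ 1. Let V be a k-vector space with basis w_0, …, w_{2p-1}, define g ∈ GL(V) by g w_i = w_{i+1} for i < 2p-1 and g w_{2p-1} = ε ∑_{i=0}^{2p-1} n_i w_i, and define a bilinear form (,) on V by (w_i, w_j) = 0 if |i-j| < p, (w_i, w_j) = x_s if j - i = p + s with s ≥ 0, and (w_i, w_j) = ε x_s if i - j = p + s with s ≥ 0. Then (,) is nondegenerate, satisfies (x,y) = ε(y,x) for all x, y ∈ V, and g is an isometry of (,). -/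

import Mathlib

open Polynomial in
private lemma aux_reflect_pow (q : Polynomial ℤ) (hq : q.natDegree ≤ 1) (m : ℕ) :
    reflect m (q ^ m) = (reflect 1 q) ^ m := by
  induction m with
  | zero =>
    simp only [pow_zero]
    ext i
    rw [coeff_reflect]
    have h : (revAt 0) i = i := by simp [revAt]; omega
    rw [h]
  | succ m ih =>
    have h1 : (q ^ m).natDegree ≤ m := by
      refine le_trans (natDegree_pow_le) ?_
      calc m * q.natDegree ≤ m * 1 := Nat.mul_le_mul_left m hq
        _ = m := mul_one m
    rw [pow_succ, reflect_mul _ _ h1 hq, ih, pow_succ]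

open Polynomial in
private lemma aux_nsym (a b e : ℕ) (he : e ≤ a + b) :
    ((1 - X) ^ a * (1 + X) ^ b : Polynomial ℤ).coeff (a + b - e)
      = (-1 : ℤ) ^ a * ((1 - X) ^ a * (1 + X) ^ b : Polynomial ℤ).coeff e := by
  have h1 : ((1 : Polynomial ℤ) - X).natDegree ≤ 1 := by
    refine le_trans (natDegree_sub_le _ _) ?_; simp
  have h2 : ((1 : Polynomial ℤ) + X).natDegree ≤ 1 := by
    refine le_trans (natDegree_add_le _ _) ?_; simp
  have hra : reflect 1 ((1 : Polynomial ℤ) - X) = X - 1 := by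
    ext i
    rw [coeff_reflect]
    match i with
    | 0 => simp [revAt_le, coeff_one, coeff_X]
    | 1 => simp [revAt_le, coeff_one, coeff_X]
    | (m+2) =>
      rw [show (revAt 1) (m+2) = m+2 by simp [revAt_eq_self_of_lt]]
      simp [coeff_one, coeff_X]
  have hrb : reflect 1 ((1 : Polynomial ℤ) + X) = 1 + X := by
    ext i
    rw [coeff_reflect]
    match i with
    | 0 => simp [revAt_le, coeff_one, coeff_X]
    | 1 => simp [revAt_le, coeff_one, coeff_X]
    | (m+2) =>
      rw [show (revAt 1) (m+2) = m+2 by simp [revAt_eq_self_of_lt]]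
  have hrefl : reflect (a+b) (((1 - X) ^ a * (1 + X) ^ b : Polynomial ℤ))
      = C ((-1:ℤ)^a) * ((1 - X) ^ a * (1 + X) ^ b) := by
    have ha' : ((1 - X : Polynomial ℤ) ^ a).natDegree ≤ a := by
      refine le_trans (natDegree_pow_le) ?_
      calc a * (1 - X : Polynomial ℤ).natDegree ≤ a * 1 := Nat.mul_le_mul_left a h1
        _ = a := mul_one a
    have hb' : ((1 + X : Polynomial ℤ) ^ b).natDegree ≤ b := by
      refine le_trans (natDegree_pow_le) ?_
      calc b * (1 + X : Polynomial ℤ).natDegree ≤ b * 1 := Nat.mul_le_mul_left b h2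
        _ = b := mul_one b
    rw [reflect_mul _ _ ha' hb', aux_reflect_pow _ h1, aux_reflect_pow _ h2, hra, hrb]
    have hX : (X - 1 : Polynomial ℤ) = (-1) * (1 - X) := by ring
    rw [hX, mul_pow]
    have hC : ((-1 : Polynomial ℤ))^a = C ((-1:ℤ)^a) := by
      rw [map_pow, map_neg, map_one]
    rw [hC]; ring
  have hcoeff := congrArg (fun q : Polynomial ℤ => q.coeff e) hrefl
  simp only [coeff_reflect, coeff_C_mul] at hcoeff
  rwa [revAt_le he] at hcoeff

private def Gf (p : ℕ) (ε : ℤ) (x : ℕ → ℤ) (i j : ℕ) : ℤ :=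
  if (p:ℤ) ≤ (j:ℤ) - (i:ℤ) then x (((j:ℤ) - (i:ℤ) - (p:ℤ)).toNat)
  else if (p:ℤ) ≤ (i:ℤ) - (j:ℤ) then ε * x (((i:ℤ) - (j:ℤ) - (p:ℤ)).toNat)
  else 0

private lemma Gf_of_ge {p : ℕ} {ε : ℤ} {x : ℕ → ℤ} {i j : ℕ} (h : i + p ≤ j) :
    Gf p ε x i j = x (j - i - p) := by
  unfold Gf
  rw [if_pos (by push_cast; omega)]
  congr 1
  omega

private lemma Gf_of_le {p : ℕ} {ε : ℤ} {x : ℕ → ℤ} {i j : ℕ} (hp : 1 ≤ p) (h : j + p ≤ i) :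
    Gf p ε x i j = ε * x (i - j - p) := by
  unfold Gf
  rw [if_neg (by push_cast; omega), if_pos (by push_cast; omega)]
  congr 2
  omega

private lemma Gf_mid {p : ℕ} {ε : ℤ} {x : ℕ → ℤ} {i j : ℕ} (h1 : j < i + p) (h2 : i < j + p) :
    Gf p ε x i j = 0 := by
  unfold Gf
  rw [if_neg (by push_cast; omega), if_neg (by push_cast; omega)]

private lemma Gf_symm {p : ℕ} {ε : ℤ} {x : ℕ → ℤ} (hp : 1 ≤ p) (hε2 : ε * ε = 1) (i j : ℕ) :
    Gf p ε x j i = ε * Gf p ε x i j := by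
  rcases le_or_gt (i + p) j with h | h
  · rw [Gf_of_le hp h, Gf_of_ge h]
  · rcases le_or_gt (j + p) i with h' | h'
    · rw [Gf_of_ge h', Gf_of_le hp h', ← mul_assoc, hε2, one_mul]
    · rw [Gf_mid h' h, Gf_mid h h', mul_zero]

private lemma Gf_shift {p : ℕ} {ε : ℤ} {x : ℕ → ℤ} (i j : ℕ) :
    Gf p ε x (i+1) (j+1) = Gf p ε x i j := by
  unfold Gf
  rw [show ((j+1:ℕ):ℤ) - ((i+1:ℕ):ℤ) = (j:ℤ) - (i:ℤ) by push_cast; ring,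
      show ((i+1:ℕ):ℤ) - ((j+1:ℕ):ℤ) = (i:ℤ) - (j:ℤ) by push_cast; ring]

private lemma aux_key (p : ℕ) (hp : 1 ≤ p) (ε : ℤ) (n x : ℕ → ℤ)
    (hn0 : n 0 = 1)
    (hnsym : ∀ e, e ≤ 2*p → n (2*p - e) = -ε * n e)
    (hx0 : x 0 = 1)
    (hx : ∀ e, 1 ≤ e → ∑ j ∈ Finset.range (e + 1), n j * x (e - j) = 0)
    (i : ℕ) (hi : i ≤ 2*p) :
    ∑ l ∈ Finset.range (2*p), n l * Gf p ε x i l = ε * Gf p ε x i (2*p) := by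
  rcases lt_or_ge i p with hip | hip
  · -- case i < p
    have hG2p : Gf p ε x i (2*p) = x (p - i) := by
      rw [Gf_of_ge (by omega)]
      congr 1
      omega
    rw [hG2p]
    have hsum : ∑ l ∈ Finset.range (2*p), n l * Gf p ε x i l
        = ∑ l ∈ Finset.Ico (i+p) (2*p), n l * Gf p ε x i l := by
      symm
      apply Finset.sum_subset
      · intro l hl
        simp only [Finset.mem_Ico] at hl
        exact Finset.mem_range.mpr hl.2
      · intro l hl hnl
        simp only [Finset.mem_range] at hl
        simp only [Finset.mem_Ico, not_and, not_le] at hnl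
        have hl2 : l < i + p := by
          by_cases h : i + p ≤ l
          · exact absurd (hnl h) (by omega)
          · omega
        rw [Gf_mid hl2 (by omega), mul_zero]
    rw [hsum, Finset.sum_Ico_eq_sum_range, show 2*p - (i+p) = p - i by omega]
    have hterm : ∀ m ∈ Finset.range (p - i), n (i+p+m) * Gf p ε x i (i+p+m)
        = -ε * (n (p-i-m) * x m) := by
      intro m hm
      simp only [Finset.mem_range] at hm
      rw [Gf_of_ge (by omega), show i+p+m - i - p = m by omega,
          show i+p+m = 2*p - (p-i-m) by omega, hnsym _ (by omega)]
      ring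
    rw [Finset.sum_congr rfl hterm, ← Finset.mul_sum]
    have hhx := hx (p-i) (by omega)
    rw [Finset.sum_range_succ'] at hhx
    have hrefl : ∑ m ∈ Finset.range (p-i), n (p-i-m) * x m
        = ∑ m ∈ Finset.range (p-i), n (m+1) * x (p-i-(m+1)) := by
      rw [← Finset.sum_range_reflect (fun m => n (m+1) * x (p-i-(m+1))) (p-i)]
      apply Finset.sum_congr rfl
      intro m hm
      simp only [Finset.mem_range] at hm
      congr 2 <;> omega
    rw [hrefl]
    have : ∑ m ∈ Finset.range (p-i), n (m+1) * x (p-i-(m+1)) = - x (p-i) := by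
      have := hhx
      simp only [hn0, one_mul, Nat.sub_zero] at this
      linarith
    rw [this]
    ring
  · -- case p ≤ i ≤ 2p
    have hsum : ∑ l ∈ Finset.range (2*p), n l * Gf p ε x i l
        = ∑ l ∈ Finset.range (i-p+1), n l * Gf p ε x i l := by
      symm
      apply Finset.sum_subset
      · intro l hl
        simp only [Finset.mem_range] at hl ⊢
        omega
      · intro l hl hnl
        simp only [Finset.mem_range] at hl hnl
        rw [Gf_mid (by omega) (by omega), mul_zero]
    rw [hsum]
    have hterm : ∀ l ∈ Finset.range (i-p+1), n l * Gf p ε x i l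
        = ε * (n l * x (i-p-l)) := by
      intro l hl
      simp only [Finset.mem_range] at hl
      rw [Gf_of_le hp (by omega), show i - l - p = i - p - l by omega]
      ring
    rw [Finset.sum_congr rfl hterm, ← Finset.mul_sum]
    rcases Nat.eq_or_lt_of_le hip with hep | hep
    · -- i = p
      have hip0 : i - p = 0 := by omega
      rw [hip0, Finset.sum_range_succ, Finset.sum_range_zero]
      norm_num [hn0, hx0]
      have : Gf p ε x i (2*p) = 1 := by
        rw [Gf_of_ge (by omega), show 2*p - i - p = 0 by omega, hx0]
      rw [this]
      ring
    · -- p < i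
      have h1 : ∑ l ∈ Finset.range (i-p+1), n l * x (i-p-l) = 0 := hx (i-p) (by omega)
      rw [h1, mul_zero]
      have : Gf p ε x i (2*p) = 0 := Gf_mid (by omega) (by omega)
      rw [this, mul_zero]
open Matrix
theorem stmt17 (k : Type*) [Field k] (h2 : (2 : k) ≠ 0)
    (p a b : ℕ) (hp : 1 ≤ p) (hab : a + b = 2 * p)
    (hpar : (-1 : ℤ) ^ a = (-1 : ℤ) ^ b)
    (ε : ℤ) (hε : ε = -(-1 : ℤ) ^ a)
    (n : ℕ → ℤ)
    (hn : ∀ e, n e =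
      ((1 - Polynomial.X) ^ a * (1 + Polynomial.X) ^ b : Polynomial ℤ).coeff e)
    (x : ℕ → ℤ) (hx0 : x 0 = 1)
    (hx : ∀ e, 1 ≤ e → ∑ j ∈ Finset.range (e + 1), n j * x (e - j) = 0)
    (A : Matrix (Fin (2 * p)) (Fin (2 * p)) k)
    (hA : ∀ i j : Fin (2 * p), A j i =
      if (i : ℕ) < 2 * p - 1 then (if (j : ℕ) = (i : ℕ) + 1 then 1 else 0)
      else ((ε * n j : ℤ) : k))
    (B : Matrix (Fin (2 * p)) (Fin (2 * p)) k)
    (hB : ∀ i j : Fin (2 * p), B i j =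
      if (p : ℤ) ≤ (j : ℤ) - (i : ℤ) then ((x ((j : ℤ) - (i : ℤ) - p).toNat : ℤ) : k)
      else if (p : ℤ) ≤ (i : ℤ) - (j : ℤ) then
        ((ε * x ((i : ℤ) - (j : ℤ) - p).toNat : ℤ) : k)
      else 0) :
    (∀ v : Fin (2 * p) → k, (∀ w, v ⬝ᵥ B.mulVec w = 0) → v = 0) ∧
    (∀ v w : Fin (2 * p) → k, v ⬝ᵥ B.mulVec w = (ε : k) * (w ⬝ᵥ B.mulVec v)) ∧
    (∀ v w : Fin (2 * p) → k,
      (A.mulVec v) ⬝ᵥ B.mulVec (A.mulVec w) = v ⬝ᵥ B.mulVec w) := by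
  have hε2 : ε * ε = 1 := by
    rw [hε, neg_mul_neg, ← pow_add]
    exact Even.neg_one_pow ⟨a, rfl⟩
  have hn0 : n 0 = 1 := by
    rw [hn 0, Polynomial.coeff_zero_eq_eval_zero]
    simp
  have hnsym : ∀ e, e ≤ 2*p → n (2*p - e) = -ε * n e := by
    intro e he
    rw [hn, hn, ← hab, aux_nsym a b e (by omega), hε, neg_neg]
  have key := aux_key p hp ε n x hn0 hnsym hx0 hx
  have hBG : ∀ i j : Fin (2*p), B i j = ((Gf p ε x (i:ℕ) (j:ℕ) : ℤ) : k) := by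
    intro i j
    rw [hB i j]
    unfold Gf
    split_ifs with h1 h2 <;> push_cast <;> ring
  have hεk : (ε:k) * (ε:k) = 1 := by
    rw [← Int.cast_mul, hε2, Int.cast_one]
  have hεknz : (ε:k) ≠ 0 := by
    intro h
    rw [h, zero_mul] at hεk
    exact zero_ne_one hεk
  refine ⟨?_, ?_, ?_⟩
  · -- nondegeneracy
    intro v hv
    have hcol : ∀ j : Fin (2*p), ∑ i : Fin (2*p), v i * B i j = 0 := by
      intro j
      have h := hv (Pi.single j 1)
      rw [Matrix.mulVec_single] at h
      simpa [dotProduct] using h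
    set u : ℕ → k := fun t => if h : t < 2*p then v ⟨t, h⟩ else 0 with hu
    have huv : ∀ i : Fin (2*p), u (i:ℕ) = v i := by
      intro i
      simp [hu, i.isLt]
    have claimA : ∀ t, t < p → u t = 0 := by
      intro t
      induction t using Nat.strong_induction_on with
      | _ t ih =>
        intro ht
        have hcolt := hcol ⟨p + t, by omega⟩
        have hsum : ∑ i : Fin (2*p), v i * B i ⟨p + t, by omega⟩
            = ∑ m ∈ Finset.range (2*p),
                (u m * (if m ≤ t then ((x (t - m) : ℤ) : k) else 0)) := by
          rw [← Fin.sum_univ_eq_sum_range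
            (fun m => u m * (if m ≤ t then ((x (t - m) : ℤ) : k) else 0)) (2*p)]
          apply Finset.sum_congr rfl
          intro i _
          rw [huv i, hBG]
          congr 1
          by_cases h : (i:ℕ) ≤ t
          · rw [if_pos h, show Fin.val (⟨p + t, by omega⟩ : Fin (2*p)) = p + t from rfl,
              Gf_of_ge (by omega), show p + t - (i:ℕ) - p = t - (i:ℕ) by omega]
          · rw [if_neg h, show Fin.val (⟨p + t, by omega⟩ : Fin (2*p)) = p + t from rfl,
              Gf_mid (by omega) (by omega), Int.cast_zero]
        rw [hsum] at hcolt
        rw [← Finset.sum_subset (Finset.range_subset_range.mpr (show t+1 ≤ 2*p by omega))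
          (fun m _ hm => by
            rw [if_neg (by simp only [Finset.mem_range] at hm; omega), mul_zero])] at hcolt
        rw [Finset.sum_range_succ] at hcolt
        have hzero : ∑ m ∈ Finset.range t,
            (u m * (if m ≤ t then ((x (t - m) : ℤ) : k) else 0)) = 0 := by
          apply Finset.sum_eq_zero
          intro m hm
          simp only [Finset.mem_range] at hm
          rw [ih m hm (by omega), zero_mul]
        rw [hzero, zero_add, if_pos (le_refl t), Nat.sub_self, hx0] at hcolt
        simpa using hcolt
    have claimB : ∀ d, d < p → u (2*p - 1 - d) = 0 := by
      intro d
      induction d using Nat.strong_induction_on with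
      | _ d ih =>
        intro hd
        have hcolt := hcol ⟨p - 1 - d, by omega⟩
        have hsum : ∑ i : Fin (2*p), v i * B i ⟨p - 1 - d, by omega⟩
            = ∑ m ∈ Finset.range (2*p),
                (u m * (if 2*p - 1 - d ≤ m then ((ε * x (m - (2*p - 1 - d)) : ℤ) : k) else 0)) := by
          rw [← Fin.sum_univ_eq_sum_range
            (fun m => u m * (if 2*p - 1 - d ≤ m then ((ε * x (m - (2*p - 1 - d)) : ℤ) : k) else 0)) (2*p)]
          apply Finset.sum_congr rfl
          intro i _
          rw [huv i, hBG]
          congr 1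
          by_cases h : 2*p - 1 - d ≤ (i:ℕ)
          · rw [if_pos h, show Fin.val (⟨p - 1 - d, by omega⟩ : Fin (2*p)) = p - 1 - d from rfl,
              Gf_of_le hp (by omega),
              show (i:ℕ) - (p - 1 - d) - p = (i:ℕ) - (2*p - 1 - d) by omega]
          · rw [if_neg h, show Fin.val (⟨p - 1 - d, by omega⟩ : Fin (2*p)) = p - 1 - d from rfl,
              Gf_mid (by omega) (by omega), Int.cast_zero]
        rw [hsum] at hcolt
        rw [← Finset.sum_subset
          (show Finset.Ico (2*p - 1 - d) (2*p) ⊆ Finset.range (2*p) from fun m hm => by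
            simp only [Finset.mem_Ico] at hm
            exact Finset.mem_range.mpr hm.2)
          (fun m hm hnm => by
            simp only [Finset.mem_range] at hm
            simp only [Finset.mem_Ico, not_and, not_le] at hnm
            rw [if_neg (by omega), mul_zero])] at hcolt
        rw [Finset.sum_Ico_eq_sum_range, show 2*p - (2*p - 1 - d) = d + 1 by omega,
          Finset.sum_range_succ'] at hcolt
        have hzero : ∑ m ∈ Finset.range d,
            (u (2*p - 1 - d + (m+1)) *
              (if 2*p - 1 - d ≤ 2*p - 1 - d + (m+1) then
                ((ε * x (2*p - 1 - d + (m+1) - (2*p - 1 - d)) : ℤ) : k) else 0)) = 0 := by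
          apply Finset.sum_eq_zero
          intro m hm
          simp only [Finset.mem_range] at hm
          rw [show 2*p - 1 - d + (m+1) = 2*p - 1 - (d - (m+1)) by omega,
            ih (d - (m+1)) (by omega) (by omega), zero_mul]
        rw [hzero, zero_add, Nat.add_zero, if_pos (le_refl _), Nat.sub_self, hx0, mul_one] at hcolt
        exact (mul_eq_zero.mp hcolt).resolve_right hεknz
    funext i
    rcases lt_or_ge (i:ℕ) p with h | h
    · have h0 := claimA (i:ℕ) h
      rw [huv i] at h0
      exact h0
    · have h0 := claimB (2*p - 1 - (i:ℕ)) (by omega)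
      rw [show 2*p - 1 - (2*p - 1 - (i:ℕ)) = (i:ℕ) by omega, huv i] at h0
      exact h0
  · -- epsilon-symmetry
    intro v w
    have hBT : B.transpose = (ε:k) • B := by
      ext i j
      simp only [Matrix.transpose_apply, Matrix.smul_apply, smul_eq_mul]
      rw [hBG j i, hBG i j, Gf_symm hp hε2 (i:ℕ) (j:ℕ), Int.cast_mul]
    rw [Matrix.dotProduct_mulVec, ← Matrix.mulVec_transpose, hBT, Matrix.smul_mulVec,
        smul_dotProduct, dotProduct_comm, smul_eq_mul]
  · -- isometry
    intro v w
    have hlast : ∀ i : Fin (2*p), ¬ ((i:ℕ) < 2*p - 1) → (i:ℕ) = 2*p - 1 := by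
      intro i h
      have := i.isLt
      omega
    have hz1 : ∀ j' : ℕ, j' ≤ 2*p →
        ∑ m ∈ Finset.range (2*p), ε * (n m * Gf p ε x m j') = Gf p ε x (2*p) j' := by
      intro j' hj'
      have e1 : ∀ m ∈ Finset.range (2*p), ε * (n m * Gf p ε x m j')
          = n m * Gf p ε x j' m := by
        intro m _
        rw [Gf_symm hp hε2 j' m,
          show ε * (n m * (ε * Gf p ε x j' m)) = ε * ε * (n m * Gf p ε x j' m) by ring,
          hε2, one_mul]
      rw [Finset.sum_congr rfl e1, key j' hj', ← Gf_symm hp hε2 j' (2*p)]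
    have hBA : ∀ (m j : Fin (2*p)), (B * A) m j =
        if (j:ℕ) < 2*p - 1 then ((Gf p ε x (m:ℕ) ((j:ℕ)+1) : ℤ) : k)
        else ((Gf p ε x (m:ℕ) (2*p) : ℤ) : k) := by
      intro m j
      rw [Matrix.mul_apply]
      by_cases hj : (j:ℕ) < 2*p - 1
      · rw [if_pos hj]
        have hj1 : (j:ℕ)+1 < 2*p := by omega
        rw [Finset.sum_eq_single (⟨(j:ℕ)+1, hj1⟩ : Fin (2*p))]
        · rw [hA j ⟨(j:ℕ)+1, hj1⟩, if_pos hj, if_pos rfl, mul_one, hBG]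
        · intro l _ hl
          rw [hA j l, if_pos hj, if_neg, mul_zero]
          intro hc
          exact hl (Fin.ext hc)
        · intro hmem
          exact absurd (Finset.mem_univ _) hmem
      · rw [if_neg hj]
        have e1 : ∀ l : Fin (2*p), B m l * A l j
            = (fun t : ℕ => ((ε * (n t * Gf p ε x (m:ℕ) t) : ℤ) : k)) (l:ℕ) := by
          intro l
          simp only
          rw [hBG m l, hA j l, if_neg hj]
          push_cast
          ring
        calc ∑ l : Fin (2*p), B m l * A l j
            = ((∑ t ∈ Finset.range (2*p), ε * (n t * Gf p ε x (m:ℕ) t) : ℤ) : k) := by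
              rw [Finset.sum_congr rfl (fun l _ => e1 l)]
              rw [Fin.sum_univ_eq_sum_range (fun t : ℕ => ((ε * (n t * Gf p ε x (m:ℕ) t) : ℤ) : k)) (2*p)]
              push_cast
              rfl
          _ = ((Gf p ε x (m:ℕ) (2*p) : ℤ) : k) := by
              rw [← Finset.mul_sum, key (m:ℕ) (le_of_lt m.isLt), ← mul_assoc, hε2, one_mul]
    have hM : A.transpose * (B * A) = B := by
      ext i j
      rw [Matrix.mul_apply]
      by_cases hi : (i:ℕ) < 2*p - 1
      · have hi1 : (i:ℕ)+1 < 2*p := by omega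
        rw [Finset.sum_eq_single (⟨(i:ℕ)+1, hi1⟩ : Fin (2*p))]
        · rw [Matrix.transpose_apply, hA i ⟨(i:ℕ)+1, hi1⟩, if_pos hi, if_pos rfl, one_mul,
            hBA ⟨(i:ℕ)+1, hi1⟩ j]
          by_cases hj : (j:ℕ) < 2*p - 1
          · rw [if_pos hj, show Fin.val (⟨(i:ℕ)+1, hi1⟩ : Fin (2*p)) = (i:ℕ)+1 from rfl,
              Gf_shift, ← hBG]
          · rw [if_neg hj]
            have hjv : (j:ℕ) = 2*p - 1 := hlast j hj
            have hsh : Gf p ε x ((i:ℕ)+1) (2*p) = Gf p ε x (i:ℕ) (2*p - 1) := by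
              have h0 := Gf_shift (p := p) (ε := ε) (x := x) (i:ℕ) (2*p - 1)
              rwa [show 2*p - 1 + 1 = 2*p by omega] at h0
            rw [show Fin.val (⟨(i:ℕ)+1, hi1⟩ : Fin (2*p)) = (i:ℕ)+1 from rfl, hsh,
              hBG i j, hjv]
        · intro l _ hl
          rw [Matrix.transpose_apply, hA i l, if_pos hi, if_neg, zero_mul]
          intro hc
          exact hl (Fin.ext hc)
        · intro hmem
          exact absurd (Finset.mem_univ _) hmem
      · have hiv : (i:ℕ) = 2*p - 1 := hlast i hi
        by_cases hj : (j:ℕ) < 2*p - 1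
        · have e1 : ∀ l : Fin (2*p), A.transpose i l * (B * A) l j
              = (fun t : ℕ => ((ε * (n t * Gf p ε x t ((j:ℕ)+1)) : ℤ) : k)) (l:ℕ) := by
            intro l
            simp only
            rw [Matrix.transpose_apply, hA i l, if_neg hi, hBA l j, if_pos hj]
            push_cast
            ring
          calc ∑ l : Fin (2*p), A.transpose i l * (B * A) l j
              = ((∑ t ∈ Finset.range (2*p), ε * (n t * Gf p ε x t ((j:ℕ)+1)) : ℤ) : k) := by
                rw [Finset.sum_congr rfl (fun l _ => e1 l)]
                rw [Fin.sum_univ_eq_sum_range (fun t : ℕ => ((ε * (n t * Gf p ε x t ((j:ℕ)+1)) : ℤ) : k)) (2*p)]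
                push_cast
                rfl
            _ = B i j := by
                rw [hz1 ((j:ℕ)+1) (by omega)]
                have hsh : Gf p ε x (2*p) ((j:ℕ)+1) = Gf p ε x (2*p - 1) (j:ℕ) := by
                  have h0 := Gf_shift (p := p) (ε := ε) (x := x) (2*p - 1) (j:ℕ)
                  rwa [show 2*p - 1 + 1 = 2*p by omega] at h0
                rw [hsh, hBG i j, hiv]
        · have hjv : (j:ℕ) = 2*p - 1 := hlast j hj
          have e1 : ∀ l : Fin (2*p), A.transpose i l * (B * A) l j
              = (fun t : ℕ => ((ε * (n t * Gf p ε x t (2*p)) : ℤ) : k)) (l:ℕ) := by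
            intro l
            simp only
            rw [Matrix.transpose_apply, hA i l, if_neg hi, hBA l j, if_neg hj]
            push_cast
            ring
          calc ∑ l : Fin (2*p), A.transpose i l * (B * A) l j
              = ((∑ t ∈ Finset.range (2*p), ε * (n t * Gf p ε x t (2*p)) : ℤ) : k) := by
                rw [Finset.sum_congr rfl (fun l _ => e1 l)]
                rw [Fin.sum_univ_eq_sum_range (fun t : ℕ => ((ε * (n t * Gf p ε x t (2*p)) : ℤ) : k)) (2*p)]
                push_cast
                rfl
            _ = B i j := by
                rw [hz1 (2*p) (le_refl _), Gf_mid (by omega) (by omega), hBG i j, hiv, hjv,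
                  Gf_mid (by omega) (by omega)]
    calc A *ᵥ v ⬝ᵥ B *ᵥ (A *ᵥ w)
        = A *ᵥ v ⬝ᵥ (B * A) *ᵥ w := by rw [Matrix.mulVec_mulVec]
      _ = (v ᵥ* A.transpose) ⬝ᵥ (B * A) *ᵥ w := by rw [Matrix.vecMul_transpose]
      _ = ((v ᵥ* A.transpose) ᵥ* (B * A)) ⬝ᵥ w := by rw [Matrix.dotProduct_mulVec]
      _ = (v ᵥ* (A.transpose * (B * A))) ⬝ᵥ w := by rw [Matrix.vecMul_vecMul]
      _ = (v ᵥ* B) ⬝ᵥ w := by rw [hM]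
      _ = v ⬝ᵥ B *ᵥ w := by rw [← Matrix.dotProduct_mulVec]
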